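/- Let R be a ring, M a quasi-projective right R-module, and N a noetherian right R-module. Then Hom_R(M, N) is a noetherian right End_R(M)-module. -/

import Mathlib

open MulOpposite

section Aux

universe uS uM uX uI

variable {S : Type uS} [Ring S] {M : Type uM} [AddCommGroup M] [Module S M]

/-- The lifting property of `M` relative to a module `A`. -/
def LiftP (S : Type uS) [Ring S] (M : Type uM) [AddCommGroup M] [Module S M]
    (A : Type*) [AddCommGroup A] [Module S A] : Prop :=
  ∀ (X : Type uX) [AddCommGroup X] [Module S X] (q : A →ₗ[S] X),
    Function.Surjective q → ∀ f : M →ₗ[S] X, ∃ g : M →ₗ[S] A, q ∘ₗ g = f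

/-- Quasi-projectivity gives the lifting property of `M` relative to itself. -/
theorem liftP_self
    (hqp : ∀ (K : Submodule S M) (f : M →ₗ[S] M ⧸ K),
      ∃ g : M →ₗ[S] M, ∀ m : M, K.mkQ (g m) = f m) :
    LiftP.{uS, uM, uX} S M M := by
  intro X _ _ q hq f
  set K := LinearMap.ker q with hK
  let e0 : (M ⧸ K) →ₗ[S] X := K.liftQ q le_rfl
  have hinj : Function.Injective e0 := by
    rw [← LinearMap.ker_eq_bot]
    exact Submodule.ker_liftQ_eq_bot _ _ _ le_rfl
  have hsurj : Function.Surjective e0 := by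
    intro x
    obtain ⟨m, rfl⟩ := hq x
    exact ⟨K.mkQ m, by simp [e0]⟩
  let e : (M ⧸ K) ≃ₗ[S] X := LinearEquiv.ofBijective e0 ⟨hinj, hsurj⟩
  obtain ⟨g, hg⟩ := hqp K ((e.symm : X →ₗ[S] M ⧸ K) ∘ₗ f)
  refine ⟨g, ?_⟩
  ext m
  have h1 : K.mkQ (g m) = e.symm (f m) := hg m
  have h2 : e (K.mkQ (g m)) = q (g m) := by show e0 (K.mkQ (g m)) = q (g m); simp [e0]
  have := congrArg e h1
  rw [h2, LinearEquiv.apply_symm_apply] at this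
  simpa using this

/-- Azumaya's lemma: the lifting property passes to products. -/
theorem liftP_prod {A : Type*} {B : Type*} [AddCommGroup A] [Module S A]
    [AddCommGroup B] [Module S B]
    (hA : LiftP.{uS, uM, uX} S M A) (hB : LiftP.{uS, uM, uX} S M B) :
    LiftP.{uS, uM, uX} S M (A × B) := by
  intro X _ _ q hq f
  set qB : B →ₗ[S] X := q ∘ₗ LinearMap.inr S A B with hqB
  set T : Submodule S X := LinearMap.range qB with hT
  have hsurj : Function.Surjective (T.mkQ ∘ₗ (q ∘ₗ LinearMap.inl S A B)) := by
    intro x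
    obtain ⟨y, rfl⟩ := T.mkQ_surjective x
    obtain ⟨⟨a, b⟩, rfl⟩ := hq y
    refine ⟨a, ?_⟩
    have hab : (a, b) = (a, 0) + ((0 : A), b) := by simp
    have hb : q (0, b) ∈ T := ⟨b, rfl⟩
    simp only [LinearMap.comp_apply, LinearMap.inl_apply]
    rw [hab, map_add, map_add]
    have hz : T.mkQ (q (0, b)) = 0 := by
      simpa [Submodule.Quotient.mk_eq_zero] using hb
    rw [hz, add_zero]
  obtain ⟨h, hh⟩ := hA _ _ hsurj (T.mkQ ∘ₗ f)
  have hmem : ∀ m, f m - q (h m, 0) ∈ T := by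
    intro m
    have h1 : T.mkQ (q (h m, 0)) = T.mkQ (f m) := by
      have := congrArg (fun φ : M →ₗ[S] X ⧸ T => φ m) hh
      simpa using this
    have h3 : T.mkQ (f m - q (h m, 0)) = 0 := by
      rw [map_sub, h1, sub_self]
    rwa [Submodule.mkQ_apply, Submodule.Quotient.mk_eq_zero] at h3
  let f' : M →ₗ[S] T :=
    LinearMap.codRestrict T (f - q ∘ₗ LinearMap.inl S A B ∘ₗ h) (fun m => hmem m)
  obtain ⟨k, hk⟩ := hB _ qB.rangeRestrict qB.surjective_rangeRestrict f'
  refine ⟨LinearMap.prod h k, ?_⟩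
  ext m
  have h1 : (qB (k m) : X) = f m - q (h m, 0) := by
    have := congrArg (fun φ : M →ₗ[S] T => ((φ m : T) : X)) hk
    simp [f'] at this
    exact this.trans rfl
  have hsplit : ((h m, k m) : A × B) = (h m, 0) + (0, k m) := by simp
  simp only [LinearMap.comp_apply, LinearMap.prod_apply, Function.prod]
  rw [hsplit, map_add]
  have h2 : q ((0 : A), k m) = qB (k m) := by simp [qB]
  rw [h2, h1]
  abel

theorem liftP_equiv {A : Type*} {B : Type*} [AddCommGroup A] [Module S A]
    [AddCommGroup B] [Module S B] (e : A ≃ₗ[S] B)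
    (hA : LiftP.{uS, uM, uX} S M A) : LiftP.{uS, uM, uX} S M B := by
  intro X _ _ q hq f
  obtain ⟨g, hg⟩ := hA _ (q ∘ₗ (e : A →ₗ[S] B)) (hq.comp e.surjective) f
  exact ⟨(e : A →ₗ[S] B) ∘ₗ g, by rw [← LinearMap.comp_assoc]; exact hg⟩

theorem liftP_pi
    (hqp : ∀ (K : Submodule S M) (f : M →ₗ[S] M ⧸ K),
      ∃ g : M →ₗ[S] M, ∀ m : M, K.mkQ (g m) = f m)
    (ι : Type uI) [Finite ι] : LiftP.{uS, uM, uX} S M (ι → M) := by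
  refine Finite.induction_empty_option (P := fun α : Type uI => LiftP.{uS, uM, uX} S M (α → M))
    ?_ ?_ ?_ ι
  · intro α β e hα
    exact liftP_equiv (LinearEquiv.piCongrLeft' S (fun _ => M) e) hα
  · intro X _ _ q hq f
    have hsub : Subsingleton (PEmpty.{uI + 1} → M) := ⟨fun a b => by ext x; exact x.elim⟩
    have hXsub : Subsingleton X := by
      constructor
      intro a b
      obtain ⟨y, rfl⟩ := hq a
      obtain ⟨z, rfl⟩ := hq b
      rw [Subsingleton.elim y z]
    exact ⟨0, by ext m; exact Subsingleton.elim _ _⟩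
  · intro α _ hα
    have e : (M × (α → M)) ≃ₗ[S] (Option α → M) :=
      (LinearEquiv.piOptionEquivProd (R := S) (M := fun _ : Option α => M)).symm
    exact liftP_equiv e (liftP_prod (liftP_self hqp) hα)

end Aux

section Key

universe uS uM uN

variable {S : Type uS} [Ring S] {M : Type uM} [AddCommGroup M] [Module S M]
  {N : Type uN} [AddCommGroup N] [Module S N]

/-- Key lemma: if `M` is quasi-projective and the range of `f` is contained in the sup of
the ranges of finitely many `fi`, then `f` is a combination `∑ i, fi i ∘ g i`. -/
theorem exists_comb
    (hqp : ∀ (K : Submodule S M) (f : M →ₗ[S] M ⧸ K),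
      ∃ g : M →ₗ[S] M, ∀ m : M, K.mkQ (g m) = f m)
    {ι : Type*} [Fintype ι] (fi : ι → (M →ₗ[S] N)) (f : M →ₗ[S] N)
    (hle : LinearMap.range f ≤ ⨆ i, LinearMap.range (fi i)) :
    ∃ g : ι → (M →ₗ[S] M), f = ∑ i, (fi i) ∘ₗ (g i) := by
  classical
  set F : (ι → M) →ₗ[S] N := ∑ i, (fi i) ∘ₗ LinearMap.proj i with hF
  have hrange : ∀ i, LinearMap.range (fi i) ≤ LinearMap.range F := by
    intro i x hx
    obtain ⟨m, rfl⟩ := hx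
    refine ⟨Pi.single i m, ?_⟩
    simp only [hF, LinearMap.sum_apply, LinearMap.comp_apply, LinearMap.proj_apply]
    rw [Finset.sum_eq_single i]
    · simp
    · intro j _ hj
      rw [Pi.single_eq_of_ne hj, map_zero]
    · intro hi
      exact absurd (Finset.mem_univ i) hi
  have hle' : LinearMap.range f ≤ LinearMap.range F :=
    hle.trans (iSup_le hrange)
  -- lift f through F.rangeRestrict
  let f' : M →ₗ[S] LinearMap.range F := LinearMap.codRestrict _ f (fun m => hle' ⟨m, rfl⟩)
  obtain ⟨g, hg⟩ := liftP_pi hqp ι _ F.rangeRestrict F.surjective_rangeRestrict f'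
  refine ⟨fun i => (LinearMap.proj i) ∘ₗ g, ?_⟩
  ext m
  have h1 : (F.rangeRestrict (g m) : N) = f m := by
    have := congrArg (fun φ : M →ₗ[S] LinearMap.range F => ((φ m : LinearMap.range F) : N)) hg
    simpa [f'] using this
  have h2 : (F.rangeRestrict (g m) : N) = F (g m) := rfl
  rw [h2] at h1
  simp only [LinearMap.sum_apply, LinearMap.comp_apply, LinearMap.proj_apply]
  rw [← h1]
  simp [hF]

end Key

/-- Let `R` be a ring, `M` a quasi-projective right `R`-module and `N`
a noetherian right `R`-module (right modules are left `Rᵐᵒᵖ`-modules). Then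
`Hom_R(M, N)` is a noetherian right module over the endomorphism ring `End_R(M)`,
where the right action is `f · g = f ∘ g`. -/
theorem hom_noetherian_over_end
    {R M N : Type*} [Ring R]
    [AddCommGroup M] [Module Rᵐᵒᵖ M] [AddCommGroup N] [Module Rᵐᵒᵖ N]
    -- M is quasi-projective
    (hqp : ∀ (K : Submodule Rᵐᵒᵖ M) (f : M →ₗ[Rᵐᵒᵖ] M ⧸ K),
      ∃ g : M →ₗ[Rᵐᵒᵖ] M, ∀ m : M, K.mkQ (g m) = f m)
    -- N is noetherian
    (hN : IsNoetherian Rᵐᵒᵖ N)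
    -- the right End_R(M)-module structure on Hom_R(M, N), f · g = f ∘ g
    [Module (Module.End Rᵐᵒᵖ M)ᵐᵒᵖ (M →ₗ[Rᵐᵒᵖ] N)]
    (hsmul : ∀ (g : Module.End Rᵐᵒᵖ M) (f : M →ₗ[Rᵐᵒᵖ] N),
      op g • f = f ∘ₗ g) :
    IsNoetherian (Module.End Rᵐᵒᵖ M)ᵐᵒᵖ (M →ₗ[Rᵐᵒᵖ] N) := by
  classical
  rw [isNoetherian_def]
  intro X
  set T : Submodule Rᵐᵒᵖ N := ⨆ f : X, LinearMap.range (f : M →ₗ[Rᵐᵒᵖ] N) with hTdef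
  have hT : T.FG := IsNoetherian.noetherian T
  have hcomp : IsCompactElement T := (Submodule.fg_iff_compact T).mp hT
  obtain ⟨t, ht⟩ := CompleteLattice.IsCompactElement.exists_finset_of_le_iSup (Submodule Rᵐᵒᵖ N) hcomp
    (fun f : X => LinearMap.range (f : M →ₗ[Rᵐᵒᵖ] N)) hTdef.le
  refine ⟨t.image Subtype.val, le_antisymm ?_ ?_⟩
  · rw [Submodule.span_le]
    intro f hf
    simp only [Finset.coe_image, Set.mem_image, Finset.mem_coe] at hf
    obtain ⟨⟨f0, hf0⟩, _, rfl⟩ := hf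
    exact hf0
  · intro f hf
    have hfle : LinearMap.range f ≤ ⨆ g : X, LinearMap.range ((g : X) : M →ₗ[Rᵐᵒᵖ] N) :=
      le_iSup (fun g : X => LinearMap.range ((g : X) : M →ₗ[Rᵐᵒᵖ] N)) ⟨f, hf⟩
    have hfle2 : LinearMap.range f ≤ ⨆ i : ↥t, LinearMap.range ((i : X) : M →ₗ[Rᵐᵒᵖ] N) := by
      refine (hfle.trans (hTdef.ge.trans ht)).trans ?_
      exact iSup₂_le fun i hi =>
        le_iSup (fun j : ↥t => LinearMap.range ((j : X) : M →ₗ[Rᵐᵒᵖ] N)) ⟨i, hi⟩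
    obtain ⟨g, hg⟩ := exists_comb hqp (fun i : ↥t => ((i : X) : M →ₗ[Rᵐᵒᵖ] N)) f hfle2
    rw [hg]
    refine Submodule.sum_mem _ ?_
    intro i _
    have := hsmul (g i) ((i : X) : M →ₗ[Rᵐᵒᵖ] N)
    rw [← this]
    refine Submodule.smul_mem _ _ (Submodule.subset_span ?_)
    simp only [Finset.coe_image, Set.mem_image, Finset.mem_coe]
    exact ⟨(i : X), i.2, rfl⟩
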